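/- Let d ≥ 2 be an integer, let β_d be the unique root in (0,1) of -ln(1-β) = (d+1)β/(d+1-dβ), and set c*_d = -ln(1-β_d)/β_d^d. Then β_d is the largest fixed point of g_{c*_d,d} in [0,1]: one has 1 - exp(-c*_d·β_d^d) = β_d, and every t ∈ (0,1] with 1 - exp(-c*_d·t^d) = t satisfies t ≤ β_d. -/

import Mathlib

private lemma neglog_hasDerivAt {x : ℝ} (hx : x < 1) :
    HasDerivAt (fun y : ℝ => -Real.log (1 - y)) (1 / (1 - x)) x := by
  have h1 : HasDerivAt (fun y : ℝ => 1 - y) (-1) x := by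
    simpa using (hasDerivAt_id x).const_sub 1
  have h2 := (Real.hasDerivAt_log (by linarith : (1:ℝ) - x ≠ 0)).comp x h1
  have h3 := h2.neg
  refine h3.congr_deriv ?_
  field_simp

set_option maxHeartbeats 1000000 in
/-- Let `d ≥ 2`, let `β` be the unique root in `(0,1)` of `-ln(1-β) = (d+1)β/(d+1-dβ)`,
and set `c* = -ln(1-β)/β^d`. Then `β` is the largest fixed point of `g_{c*,d}` in
`[0,1]`: `1 - exp(-c* β^d) = β`, and every `t ∈ (0,1]` with `1 - exp(-c* t^d) = t`
satisfies `t ≤ β`. -/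
theorem beta_is_largest_fixed_point (d : ℕ) (hd : 2 ≤ d) (β : ℝ)
    (hβ : β ∈ Set.Ioo (0 : ℝ) 1)
    (hroot : -Real.log (1 - β) = ((d : ℝ) + 1) * β / ((d : ℝ) + 1 - d * β))
    (cstar : ℝ) (hcstar : cstar = -Real.log (1 - β) / β ^ d) :
    1 - Real.exp (-cstar * β ^ d) = β ∧
      ∀ t ∈ Set.Ioc (0 : ℝ) 1, 1 - Real.exp (-cstar * t ^ d) = t → t ≤ β := by
  obtain ⟨hβ0, hβ1⟩ := hβ
  set D : ℝ := (d : ℝ) with hD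
  have hD2 : (2:ℝ) ≤ D := by rw [hD]; exact_mod_cast hd
  have hβd : (0:ℝ) < β ^ d := pow_pos hβ0 d
  have hcb : cstar * β ^ d = -Real.log (1 - β) := by
    rw [hcstar, div_mul_cancel₀]
    exact ne_of_gt hβd
  have hfix : 1 - Real.exp (-cstar * β ^ d) = β := by
    have h1 : -cstar * β ^ d = Real.log (1 - β) := by
      rw [neg_mul, hcb]; ring
    rw [h1, Real.exp_log (by linarith)]; ring
  refine ⟨hfix, ?_⟩
  -- Step B : d² β > d² - 1
  have hB : D ^ 2 - 1 < D ^ 2 * β := by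
    by_contra hcon
    push_neg at hcon
    set F : ℝ → ℝ := fun x => -Real.log (1 - x) - (D + 1) * x / (D + 1 - D * x) with hF
    have hFder : ∀ x : ℝ, x < 1 →
        HasDerivAt F (1 / (1 - x) - (D + 1) ^ 2 / (D + 1 - D * x) ^ 2) x := by
      intro x hx
      have hden : (0:ℝ) < D + 1 - D * x := by nlinarith
      have hu : HasDerivAt (fun y : ℝ => (D + 1) * y) (D + 1) x := by
        simpa using (hasDerivAt_id x).const_mul (D + 1)
      have hv : HasDerivAt (fun y : ℝ => D + 1 - D * y) (-D) x := by
        simpa using ((hasDerivAt_id x).const_mul D).const_sub (D + 1)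
      have hq := hu.div hv (ne_of_gt hden)
      have h := (neglog_hasDerivAt hx).sub hq
      refine h.congr_deriv ?_
      field_simp
      ring
    have hanti : StrictAntiOn F (Set.Icc 0 β) := by
      apply strictAntiOn_of_deriv_neg (convex_Icc 0 β)
      · intro x hx
        exact (hFder x (lt_of_le_of_lt hx.2 hβ1)).continuousAt.continuousWithinAt
      · intro x hx
        rw [interior_Icc] at hx
        obtain ⟨hx0, hxβ⟩ := hx
        have hx1 : x < 1 := lt_trans hxβ hβ1
        rw [(hFder x hx1).deriv]
        have hden : (0:ℝ) < D + 1 - D * x := by nlinarith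
        have hkey : (D + 1 - D * x) ^ 2 < (D + 1) ^ 2 * (1 - x) := by
          have hx' : D ^ 2 * x < D ^ 2 - 1 := by
            have : D ^ 2 * x < D ^ 2 * β := by nlinarith
            linarith
          nlinarith [mul_pos hx0 (show (0:ℝ) < D ^ 2 - 1 - D ^ 2 * x by linarith)]
        have h1 : 1 / (1 - x) < (D + 1) ^ 2 / (D + 1 - D * x) ^ 2 := by
          rw [div_lt_div_iff₀ (by linarith) (by positivity)]
          nlinarith
        linarith
    have h0 : (0:ℝ) ∈ Set.Icc (0:ℝ) β := ⟨le_refl _, le_of_lt hβ0⟩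
    have hb : β ∈ Set.Icc (0:ℝ) β := ⟨le_of_lt hβ0, le_refl _⟩
    have hlt := hanti h0 hb hβ0
    have hF0 : F 0 = 0 := by simp [hF]
    have hFβ : F β = 0 := by
      simp only [hF]
      rw [hroot]; ring
    rw [hF0, hFβ] at hlt
    exact lt_irrefl 0 hlt
  -- the auxiliary function φ
  set φ : ℝ → ℝ := fun x => x / (1 - x) + D * Real.log (1 - x) with hφdef
  have hden : (0:ℝ) < D + 1 - D * β := by nlinarith
  have hφβ : 0 < φ β := by
    have hlog : Real.log (1 - β) = -((D + 1) * β / (D + 1 - D * β)) := by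
      linarith [hroot]
    have h2 : D * ((D + 1) * β / (D + 1 - D * β)) < β / (1 - β) := by
      rw [← mul_div_assoc]
      rw [div_lt_div_iff₀ hden (by linarith : (0:ℝ) < 1 - β)]
      nlinarith [mul_pos hβ0 (show (0:ℝ) < D ^ 2 * β - (D ^ 2 - 1) by linarith)]
    simp only [hφdef]
    rw [hlog, mul_neg]
    linarith
  have hφder : ∀ x : ℝ, x < 1 →
      HasDerivAt φ ((1 - D * (1 - x)) / (1 - x) ^ 2) x := by
    intro x hx
    have hne : (1:ℝ) - x ≠ 0 := by linarith
    have hu : HasDerivAt (fun y : ℝ => y / (1 - y))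
        ((1 * (1 - x) - x * (-1)) / (1 - x) ^ 2) x := by
      exact (hasDerivAt_id x).div (by simpa using (hasDerivAt_id x).const_sub 1) hne
    have hv : HasDerivAt (fun y : ℝ => D * Real.log (1 - y)) (D * ((1 - x)⁻¹ * (-1))) x := by
      have h1 : HasDerivAt (fun y : ℝ => 1 - y) (-1) x := by
        simpa using (hasDerivAt_id x).const_sub 1
      exact ((Real.hasDerivAt_log hne).comp x h1).const_mul D
    have h := hu.add hv
    refine h.congr_deriv ?_
    field_simp
    ring
  have hβD : D * (1 - β) < 1 := by
    nlinarith
  have hφmono : StrictMonoOn φ (Set.Ico β 1) := by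
    apply strictMonoOn_of_deriv_pos (convex_Ico β 1)
    · intro x hx
      exact (hφder x hx.2).continuousAt.continuousWithinAt
    · intro x hx
      rw [interior_Ico] at hx
      obtain ⟨hxβ, hx1⟩ := hx
      rw [(hφder x hx1).deriv]
      apply div_pos
      · nlinarith [mul_lt_mul_of_pos_left (show (1:ℝ) - x < 1 - β by linarith)
          (show (0:ℝ) < D by linarith)]
      · exact pow_pos (by linarith : (0:ℝ) < 1 - x) 2
  have hφpos : ∀ x ∈ Set.Ico β 1, 0 < φ x := by
    intro x hx
    rcases eq_or_lt_of_le hx.1 with h | h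
    · rw [← h]; exact hφβ
    · exact lt_trans hφβ (hφmono ⟨le_refl _, hβ1⟩ hx h)
  -- the function h(x) = -log(1-x)/x^d is strictly increasing on [β,1)
  have hhder : ∀ x : ℝ, 0 < x → x < 1 →
      HasDerivAt (fun y : ℝ => -Real.log (1 - y) / y ^ d)
        ((1 / (1 - x) * x ^ d - -Real.log (1 - x) * (D * x ^ (d - 1))) / (x ^ d) ^ 2) x := by
    intro x hx0 hx1
    have h := (neglog_hasDerivAt hx1).div (hasDerivAt_pow d x) (pow_ne_zero d (ne_of_gt hx0))
    exact h
  have hfmono : StrictMonoOn (fun y : ℝ => -Real.log (1 - y) / y ^ d) (Set.Ico β 1) := by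
    apply strictMonoOn_of_deriv_pos (convex_Ico β 1)
    · intro x hx
      exact (hhder x (lt_of_lt_of_le hβ0 hx.1) hx.2).continuousAt.continuousWithinAt
    · intro x hx
      rw [interior_Ico] at hx
      obtain ⟨hxβ, hx1⟩ := hx
      have hx0 : 0 < x := lt_trans hβ0 hxβ
      rw [(hhder x hx0 hx1).deriv]
      apply div_pos
      · have hpow : x ^ d = x ^ (d - 1) * x := by
          conv_lhs => rw [show d = (d - 1) + 1 by omega]
          rw [pow_succ]
        have hnum : 1 / (1 - x) * x ^ d - -Real.log (1 - x) * (D * x ^ (d - 1)) =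
            x ^ (d - 1) * φ x := by
          simp only [hφdef]
          rw [hpow]
          have hne : (1:ℝ) - x ≠ 0 := by linarith
          field_simp
          ring
        rw [hnum]
        exact mul_pos (pow_pos hx0 _) (hφpos x ⟨le_of_lt hxβ, hx1⟩)
      · positivity
  -- conclude
  intro t ht hfixt
  obtain ⟨ht0, ht1⟩ := ht
  by_contra hlt
  push_neg at hlt
  have ht1' : t < 1 := by
    rcases lt_or_eq_of_le ht1 with h | h
    · exact h
    · exfalso
      rw [h] at hfixt
      have h2 : Real.exp (-cstar * 1 ^ d) = 0 := by linarith
      exact absurd h2 (ne_of_gt (Real.exp_pos _))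
  have hmem1 : β ∈ Set.Ico β (1:ℝ) := ⟨le_refl _, hβ1⟩
  have hmem2 : t ∈ Set.Ico β (1:ℝ) := ⟨le_of_lt hlt, ht1'⟩
  have hmono := hfmono hmem1 hmem2 hlt
  simp only at hmono
  have hfβ : -Real.log (1 - β) / β ^ d = cstar := hcstar.symm
  rw [hfβ] at hmono
  have htd : (0:ℝ) < t ^ d := pow_pos ht0 d
  have h1 : cstar * t ^ d < -Real.log (1 - t) := by
    have := (lt_div_iff₀ htd).mp hmono
    linarith
  have h2 : Real.log (1 - t) < -(cstar * t ^ d) := by linarith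
  have h3 : 1 - t < Real.exp (-(cstar * t ^ d)) := by
    calc 1 - t = Real.exp (Real.log (1 - t)) := (Real.exp_log (by linarith)).symm
    _ < Real.exp (-(cstar * t ^ d)) := Real.exp_lt_exp.mpr h2
  rw [show -(cstar * t ^ d) = -cstar * t ^ d by ring] at h3
  linarith
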